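/- Let G be a unimodular locally compact Hausdorff group with Haar measure |·|, let K ⊆ G be a nonempty compact set containing the identity, let 0 < δ < 1 and let T ⊆ G be compact and (K, δ)-invariant. Set S := {g ∈ G : Kg ⊆ T}. Then: (i) |S| ≥ (1−δ)|T|; (ii) for every g ∈ G the Haar measure of {c ∈ S : g ∈ Kc} is at most |K|, i.e. ∫_S 1_{Kc}(g) dc ≤ |K|. -/

import Mathlib

open MeasureTheory Set
open scoped NNReal ENNReal

/-- The `K`-boundary of a set `T` in a group `G`. -/
def kBoundary {G : Type*} [Group G] (K T : Set G) : Set G :=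
  {g : G | ((fun k => k * g) '' K ∩ T).Nonempty ∧ ((fun k => k * g) '' K ∩ Tᶜ).Nonempty}

theorem stmt_5 {G : Type*} [Group G] [TopologicalSpace G] [IsTopologicalGroup G] [T2Space G]
    [LocallyCompactSpace G] [MeasurableSpace G] [BorelSpace G]
    (μ : Measure G) [μ.IsHaarMeasure] [μ.IsMulRightInvariant]
    (K T : Set G) (hKc : IsCompact K) (hKne : K.Nonempty) (h1K : (1 : G) ∈ K)
    (hTc : IsCompact T) (δ : ℝ) (hδ0 : 0 < δ) (hδ1 : δ < 1)
    (hTpos : 0 < μ T) (hinv : μ (kBoundary K T) < ENNReal.ofReal δ * μ T) :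
    ENNReal.ofReal (1 - δ) * μ T ≤ μ {g : G | (fun k => k * g) '' K ⊆ T} ∧
    ∀ g : G,
      μ {c : G | (fun k => k * c) '' K ⊆ T ∧ g ∈ (fun k => k * c) '' K} ≤ μ K := by
  constructor
  · have hsub : T ⊆ {g : G | (fun k => k * g) '' K ⊆ T} ∪ kBoundary K T := by
      intro g hg
      by_cases h : (fun k => k * g) '' K ⊆ T
      · exact Or.inl h
      · refine Or.inr ⟨⟨g, ⟨1, h1K, one_mul g⟩, hg⟩, ?_⟩
        obtain ⟨x, hx, hxT⟩ := not_subset.1 h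
        exact ⟨x, hx, hxT⟩
    have hT : μ T ≤ μ {g : G | (fun k => k * g) '' K ⊆ T} + ENNReal.ofReal δ * μ T := by
      calc μ T ≤ μ ({g : G | (fun k => k * g) '' K ⊆ T} ∪ kBoundary K T) := measure_mono hsub
        _ ≤ μ {g : G | (fun k => k * g) '' K ⊆ T} + μ (kBoundary K T) := measure_union_le _ _
        _ ≤ _ := add_le_add_right hinv.le _
    rw [ENNReal.ofReal_sub _ hδ0.le, ENNReal.ofReal_one,
      ENNReal.sub_mul (fun _ _ => hTc.measure_lt_top.ne), one_mul]
    exact tsub_le_iff_right.2 hT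
  · -- inversion invariance on compact sets
    have hinvmeas : ∀ s : Set G, IsCompact s → μ s⁻¹ = μ s := by
      have hfin : IsFiniteMeasureOnCompacts μ.inv :=
        ⟨fun {s} hs => by rw [Measure.inv_apply]; exact hs.inv.measure_lt_top⟩
      set c : ℝ≥0 := Measure.haarScalarFactor μ.inv μ with hc
      have key : ∀ s : Set G, IsCompact s → μ s⁻¹ = c • μ s := by
        intro s hs
        rw [← Measure.inv_apply]
        exact Measure.measure_isMulInvariant_eq_smul_of_isCompact_closure μ.inv μ
          (by rwa [hs.isClosed.closure_eq])
      obtain ⟨P⟩ : Nonempty (TopologicalSpace.PositiveCompacts G) := inferInstance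
      have h1 : μ (P : Set G)⁻¹ = c • μ P := key P P.isCompact
      have h2 : μ (P : Set G) = c • μ (P : Set G)⁻¹ := by
        have := key (P : Set G)⁻¹ P.isCompact.inv
        rwa [inv_inv] at this
      have hP0 : μ (P : Set G) ≠ 0 :=
        (μ.measure_pos_of_nonempty_interior P.interior_nonempty).ne'
      have hPtop : μ (P : Set G) ≠ ⊤ := P.isCompact.measure_lt_top.ne
      have hc2 : (c : ℝ≥0∞) * ((c : ℝ≥0∞) * μ (P : Set G)) = μ (P : Set G) := by
        rw [ENNReal.smul_def, smul_eq_mul] at h1 h2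
        nth_rewrite 2 [h2]
        rw [h1]
      have hc1 : (c : ℝ≥0∞) = 1 := by
        have h3 : (c : ℝ≥0∞) * (c : ℝ≥0∞) * μ (P : Set G) = 1 * μ (P : Set G) := by
          rw [mul_assoc, hc2, one_mul]
        have := (ENNReal.mul_left_inj hP0 hPtop).1 h3
        have h' : (c : ℝ≥0∞) ^ 2 = 1 ^ 2 := by rw [pow_two, pow_two, this, one_mul]
        exact (ENNReal.pow_right_strictMono two_ne_zero).injective h'
      intro s hs
      rw [key s hs, ENNReal.smul_def, smul_eq_mul, hc1, one_mul]
    intro g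
    have hsubset : {c : G | (fun k => k * c) '' K ⊆ T ∧ g ∈ (fun k => k * c) '' K}
        ⊆ (fun x => x * g) '' K⁻¹ := by
      rintro c ⟨-, k, hk, hkc⟩
      exact ⟨k⁻¹, inv_mem_inv.2 hk, by rw [← hkc]; group⟩
    have himg : (fun x => x * g) '' K⁻¹ = (fun x => x * g⁻¹) ⁻¹' K⁻¹ := by
      ext x
      simp only [mem_image, mem_preimage]
      constructor
      · rintro ⟨y, hy, rfl⟩; simpa using hy
      · intro hx; exact ⟨x * g⁻¹, hx, by group⟩
    calc μ {c : G | (fun k => k * c) '' K ⊆ T ∧ g ∈ (fun k => k * c) '' K}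
        ≤ μ ((fun x => x * g) '' K⁻¹) := measure_mono hsubset
      _ = μ K⁻¹ := by rw [himg, measure_preimage_mul_right]
      _ = μ K := hinvmeas K hKc
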